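/- Let Φ be the standard normal CDF and logit(x) = log(x) - log(1-x). For constants a_U > 0 > a_L and b_U, b_L ∈ ℝ, the function h(n) = logit(Φ(a_U√n + b_U) - Φ(a_L√n + b_L)) satisfies lim_{n→∞} dh/dn = (1/2)·min{a_U², a_L²}. -/

import Mathlib

open Filter Real

/-- Standard normal CDF. -/
noncomputable def stdNormalCDF (z : ℝ) : ℝ :=
  ∫ t in Set.Iic z, Real.exp (-t ^ 2 / 2) / Real.sqrt (2 * Real.pi)

/-- Logit function. -/
noncomputable def logit (x : ℝ) : ℝ := Real.log x - Real.log (1 - x)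

open MeasureTheory Set

noncomputable def E (t : ℝ) : ℝ := Real.exp (-t ^ 2 / 2)

lemma E_pos (t : ℝ) : 0 < E t := Real.exp_pos _
lemma continuous_E : Continuous E := by unfold E; fun_prop
lemma integrable_E' : Integrable E := by
  have := integrable_exp_neg_mul_sq (b := (1/2 : ℝ)) (by norm_num)
  convert this using 2 with t; unfold E; ring_nf

lemma tendsto_E_atTop : Tendsto E atTop (nhds 0) := by
  apply Real.tendsto_exp_atBot.comp
  have : Tendsto (fun t : ℝ => t ^ 2 / 2) atTop atTop :=
    (tendsto_pow_atTop (two_ne_zero)).atTop_div_const (by norm_num)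
  have h2 : Tendsto (fun t : ℝ => -(t ^ 2 / 2)) atTop atBot := tendsto_neg_atBot_iff.mpr this
  exact h2.congr (fun t => by ring)

-- upper Mills bound
lemma tail_E_le {z : ℝ} (hz : 0 < z) : ∫ t in Set.Ioi z, E t ≤ E z / z := by
  set g : ℝ → ℝ := fun t => -E t / t with hg
  set g' : ℝ → ℝ := fun t => E t * (1 + t⁻¹ ^ 2) with hg'
  have hderiv : ∀ t : ℝ, t ≠ 0 → HasDerivAt g (g' t) t := by
    intro t ht
    have hE : HasDerivAt E (Real.exp (-t ^ 2 / 2) * (-t)) t := by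
      have h1 : HasDerivAt (fun t : ℝ => -t ^ 2 / 2) (-t) t := by
        have := ((hasDerivAt_pow 2 t).neg).div_const 2
        exact this.congr_deriv (by norm_num [neg_div])
      exact (Real.hasDerivAt_exp _).comp t h1
    have := ((hE.neg).div (hasDerivAt_id t) ht)
    refine this.congr_deriv ?_
    simp only [id, Pi.neg_apply, hg', E]
    field_simp
    ring
  have hint : IntegrableOn g' (Set.Ioi z) := by
    apply Integrable.mono' ((integrable_E'.const_mul (1 + z⁻¹ ^ 2)).integrableOn)
    · exact (continuous_E.measurable.mul
        (((measurable_id.inv).pow_const 2).const_add 1)).aestronglyMeasurable.restrict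
    · filter_upwards [ae_restrict_mem measurableSet_Ioi] with t ht
      have htz : z ≤ t := le_of_lt ht
      have h0 : (0:ℝ) < t := lt_of_lt_of_le hz htz
      rw [Real.norm_eq_abs, abs_of_pos (mul_pos (E_pos t) (by positivity))]
      have : t⁻¹ ^ 2 ≤ z⁻¹ ^ 2 := by
        apply pow_le_pow_left₀ (by positivity)
        exact inv_anti₀ hz htz
      calc E t * (1 + t⁻¹ ^ 2) ≤ E t * (1 + z⁻¹ ^ 2) := by
            apply mul_le_mul_of_nonneg_left (by linarith) (E_pos t).le
        _ = (1 + z⁻¹ ^ 2) * E t := by ring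
  have htend : Tendsto g atTop (nhds 0) := by
    have : Tendsto (fun t : ℝ => -E t * t⁻¹) atTop (nhds ((-0) * 0)) :=
      (tendsto_E_atTop.neg).mul tendsto_inv_atTop_zero
    simpa [hg, div_eq_mul_inv] using this
  have hfund := integral_Ioi_of_hasDerivAt_of_tendsto
    (f := g) (f' := g') (a := z) (m := 0)
    (((hderiv z hz.ne').continuousAt).continuousWithinAt)
    (fun x hx => hderiv x (ne_of_gt (lt_trans hz hx))) hint htend
  have : ∫ t in Set.Ioi z, E t ≤ ∫ t in Set.Ioi z, g' t := by
    apply setIntegral_mono_on integrable_E'.integrableOn hint measurableSet_Ioi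
    intro t ht
    show E t ≤ E t * (1 + t⁻¹ ^ 2)
    nlinarith [E_pos t, sq_nonneg t⁻¹]
  rw [hfund] at this
  calc ∫ t in Set.Ioi z, E t ≤ 0 - g z := this
    _ = E z / z := by simp [hg, neg_div]

-- lower Mills bound
lemma le_tail_E {z : ℝ} (hz : 0 < z) : z / (z ^ 2 + 1) * E z ≤ ∫ t in Set.Ioi z, E t := by
  set h : ℝ → ℝ := fun t => t / (t ^ 2 + 1) * E t with hh
  set h' : ℝ → ℝ := fun t => E t * (2 / (t ^ 2 + 1) ^ 2 - 1) with hh'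
  have hq : ∀ t : ℝ, t ^ 2 + 1 ≠ 0 := fun t => by positivity
  have hderiv : ∀ t : ℝ, HasDerivAt h (h' t) t := by
    intro t
    have hE : HasDerivAt E (E t * (-t)) t := by
      have h1 : HasDerivAt (fun t : ℝ => -t ^ 2 / 2) (-t) t := by
        have := ((hasDerivAt_pow 2 t).neg).div_const 2
        exact this.congr_deriv (by norm_num [neg_div])
      exact (Real.hasDerivAt_exp _).comp t h1
    have hf : HasDerivAt (fun t : ℝ => t / (t ^ 2 + 1)) ((1 - t ^ 2) / (t ^ 2 + 1) ^ 2) t := by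
      have h2 : HasDerivAt (fun t : ℝ => t ^ 2 + 1) (2 * t) t := by
        have := (hasDerivAt_pow 2 t).add_const 1
        exact this.congr_deriv (by norm_num)
      have := (hasDerivAt_id t).div h2 (hq t)
      refine this.congr_deriv ?_
      simp only [id]
      field_simp
      ring
    have := hf.mul hE
    refine this.congr_deriv ?_
    rw [hh']
    field_simp
    ring
  have hbnd : ∀ t : ℝ, ‖h' t‖ ≤ E t := by
    intro t
    rw [hh', Real.norm_eq_abs, abs_mul, abs_of_pos (E_pos t)]
    have h1 : (1:ℝ) ≤ (t ^ 2 + 1) ^ 2 := by nlinarith [sq_nonneg t]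
    have h2 : |2 / (t ^ 2 + 1) ^ 2 - 1| ≤ 1 := by
      rw [abs_le]
      constructor
      · have : (0:ℝ) ≤ 2 / (t ^ 2 + 1) ^ 2 := by positivity
        linarith
      · have : 2 / (t ^ 2 + 1) ^ 2 ≤ 2 := by
          rw [div_le_iff₀ (by positivity)]; nlinarith
        linarith
    calc E t * |2 / (t ^ 2 + 1) ^ 2 - 1| ≤ E t * 1 :=
          mul_le_mul_of_nonneg_left h2 (E_pos t).le
      _ = E t := mul_one _
  have hint : IntegrableOn h' (Set.Ioi z) := by
    apply Integrable.mono' integrable_E'.integrableOn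
    · have hch' : Continuous h' := continuous_E.mul
        ((continuous_const.div (((continuous_pow 2).add continuous_const).pow 2)
          (fun t => by simp only [Pi.pow_apply, Pi.add_apply]; positivity)).sub continuous_const)
      exact hch'.aestronglyMeasurable.restrict
    · exact Eventually.of_forall fun t => hbnd t
  have htend : Tendsto h atTop (nhds 0) := by
    apply squeeze_zero_norm _ tendsto_E_atTop
    intro t
    rw [hh, Real.norm_eq_abs, abs_mul, abs_of_pos (E_pos t)]
    have : |t / (t ^ 2 + 1)| ≤ 1 := by
      rw [abs_div, abs_of_pos (show (0:ℝ) < t ^ 2 + 1 by positivity), div_le_one (by positivity)]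
      nlinarith [abs_nonneg t, sq_abs t, sq_nonneg (|t| - 1)]
    calc |t / (t ^ 2 + 1)| * E t ≤ 1 * E t := mul_le_mul_of_nonneg_right this (E_pos t).le
      _ = E t := one_mul _
  have hfund := integral_Ioi_of_hasDerivAt_of_tendsto
    (f := h) (f' := h') (a := z) (m := 0)
    ((hderiv z).continuousAt.continuousWithinAt)
    (fun x _ => hderiv x) hint htend
  have hneg : ∫ t in Set.Ioi z, (-h' t) ≤ ∫ t in Set.Ioi z, E t := by
    apply setIntegral_mono_on hint.neg integrable_E'.integrableOn measurableSet_Ioi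
    intro t _
    have hb := hbnd t
    rw [Real.norm_eq_abs, abs_le] at hb
    show -h' t ≤ E t
    linarith [hb.1]
  rw [integral_neg, hfund] at hneg
  have : h z ≤ ∫ t in Set.Ioi z, E t := by
    simpa using hneg
  calc z / (z ^ 2 + 1) * E z = h z := rfl
    _ ≤ _ := this


noncomputable def phi (z : ℝ) : ℝ := Real.exp (-z ^ 2 / 2) / Real.sqrt (2 * Real.pi)

lemma phi_pos (z : ℝ) : 0 < phi z :=
  div_pos (Real.exp_pos _) (Real.sqrt_pos.2 (by positivity))

lemma integrable_E0 : Integrable (fun t : ℝ => Real.exp (-t ^ 2 / 2)) := by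
  have := integrable_exp_neg_mul_sq (b := (1/2 : ℝ)) (by norm_num)
  convert this using 2 with t
  ring_nf

lemma integrable_phi : Integrable phi := by
  have := integrable_E0.div_const (Real.sqrt (2 * Real.pi))
  exact this

lemma integral_phi : ∫ t : ℝ, phi t = 1 := by
  unfold phi
  rw [integral_div]
  have : ∫ t : ℝ, Real.exp (-t ^ 2 / 2) = Real.sqrt (2 * Real.pi) := by
    have h := integral_gaussian (1/2 : ℝ)
    have : (fun t : ℝ => Real.exp (-t ^ 2 / 2)) = fun t : ℝ => Real.exp (-(1/2) * t ^ 2) := by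
      funext t; ring_nf
    rw [this, h]
    rw [div_div_eq_mul_div, mul_comm]
    norm_num [mul_comm]
  rw [this, div_self (by positivity)]

lemma stdNormalCDF_eq (z : ℝ) : stdNormalCDF z = ∫ t in Set.Iic z, phi t := rfl

lemma continuous_phi : Continuous phi := by
  unfold phi; fun_prop

lemma hasDerivAt_cdf (z : ℝ) : HasDerivAt stdNormalCDF (phi z) z := by
  have key : ∀ w : ℝ, stdNormalCDF w = stdNormalCDF 0 + ∫ t in (0:ℝ)..w, phi t := by
    intro w
    have := intervalIntegral.integral_Iic_sub_Iic (f := phi) (μ := volume) (a := (0:ℝ)) (b := w)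
      (integrable_phi.integrableOn) (integrable_phi.integrableOn)
    rw [stdNormalCDF_eq, stdNormalCDF_eq, ← this]; ring
  have hD : HasDerivAt (fun w => stdNormalCDF 0 + ∫ t in (0:ℝ)..w, phi t) (phi z) z := by
    apply HasDerivAt.const_add
    exact intervalIntegral.integral_hasDerivAt_right
      (integrable_phi.intervalIntegrable)
      (continuous_phi.aestronglyMeasurable.stronglyMeasurableAtFilter)
      continuous_phi.continuousAt
  exact hD.congr_of_eventuallyEq (Eventually.of_forall key)

lemma cdf_pos (z : ℝ) : 0 < stdNormalCDF z := by
  rw [stdNormalCDF_eq]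
  rw [setIntegral_pos_iff_support_of_nonneg_ae
    (Eventually.of_forall (fun t => (phi_pos t).le)) integrable_phi.integrableOn]
  have : Function.support phi = Set.univ := by
    ext t; simp [Function.mem_support, (phi_pos t).ne']
  rw [this, Set.univ_inter]
  simp [Real.volume_Iic]

lemma cdf_add_tail (z : ℝ) : stdNormalCDF z + ∫ t in Set.Ioi z, phi t = 1 := by
  rw [stdNormalCDF_eq, intervalIntegral.integral_Iic_add_Ioi integrable_phi.integrableOn
    integrable_phi.integrableOn, integral_phi]

lemma tail_pos (z : ℝ) : 0 < ∫ t in Set.Ioi z, phi t := by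
  rw [setIntegral_pos_iff_support_of_nonneg_ae
    (Eventually.of_forall (fun t => (phi_pos t).le)) integrable_phi.integrableOn]
  have : Function.support phi = Set.univ := by
    ext t; simp [Function.mem_support, (phi_pos t).ne']
  rw [this, Set.univ_inter]
  simp [Real.volume_Ioi]

lemma cdf_lt_one (z : ℝ) : stdNormalCDF z < 1 := by
  have := cdf_add_tail z
  have := tail_pos z
  linarith

lemma cdf_strictMono : StrictMono stdNormalCDF := by
  intro a b hab
  have h := intervalIntegral.integral_Iic_sub_Iic (f := phi) (μ := volume) (a := a) (b := b)
    (integrable_phi.integrableOn) (integrable_phi.integrableOn)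
  rw [stdNormalCDF_eq, stdNormalCDF_eq, ← sub_pos, h]
  apply intervalIntegral.intervalIntegral_pos_of_pos_on
    (integrable_phi.intervalIntegrable) (fun x _ => phi_pos x) hab

/-! Glue lemmas -/

lemma phi_eq (z : ℝ) : phi z = E z / Real.sqrt (2 * Real.pi) := rfl

lemma phi_even (z : ℝ) : phi (-z) = phi z := by unfold phi; ring_nf

lemma sqrtpi_pos : 0 < Real.sqrt (2 * Real.pi) := Real.sqrt_pos.2 (by positivity)

lemma tailphi_le {z : ℝ} (hz : 0 < z) : ∫ t in Set.Ioi z, phi t ≤ phi z / z := by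
  have h := tail_E_le hz
  have heq : ∫ t in Set.Ioi z, phi t = (∫ t in Set.Ioi z, E t) / Real.sqrt (2 * Real.pi) := by
    rw [← integral_div]; rfl
  rw [heq, phi_eq, div_div, mul_comm (Real.sqrt (2 * Real.pi)) z, ← div_div]
  gcongr
lemma le_tailphi {z : ℝ} (hz : 0 < z) : z / (z ^ 2 + 1) * phi z ≤ ∫ t in Set.Ioi z, phi t := by
  have h := le_tail_E hz
  have heq : ∫ t in Set.Ioi z, phi t = (∫ t in Set.Ioi z, E t) / Real.sqrt (2 * Real.pi) := by
    rw [← integral_div]; rfl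
  rw [heq, phi_eq, le_div_iff₀ sqrtpi_pos]
  calc z / (z ^ 2 + 1) * (E z / Real.sqrt (2 * Real.pi)) * Real.sqrt (2 * Real.pi)
      = z / (z ^ 2 + 1) * E z := by field_simp
    _ ≤ _ := h

lemma cdf_eq_tail_neg (z : ℝ) : stdNormalCDF z = ∫ t in Set.Ioi (-z), phi t := by
  rw [stdNormalCDF_eq]
  have := integral_comp_neg_Ioi (-z) phi
  rw [neg_neg] at this
  rw [← this]
  congr 1
  funext t
  exact phi_even t

/-! Limit infrastructure -/

lemma tendsto_sqrt_top : Tendsto Real.sqrt atTop atTop := by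
  apply tendsto_atTop_atTop.2
  intro b
  refine ⟨max (b ^ 2) 0, fun a ha => ?_⟩
  have h0 : (0:ℝ) ≤ a := le_trans (le_max_right _ _) ha
  have h1 : b ^ 2 ≤ a := le_trans (le_max_left _ _) ha
  calc b ≤ |b| := le_abs_self b
    _ = Real.sqrt (b ^ 2) := (Real.sqrt_sq_eq_abs b).symm
    _ ≤ Real.sqrt a := Real.sqrt_le_sqrt h1

lemma E_even (t : ℝ) : E (-t) = E t := by unfold E; ring_nf

lemma tendsto_E_atBot : Tendsto E atBot (nhds 0) := by
  have := tendsto_E_atTop.comp tendsto_neg_atBot_atTop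
  exact this.congr fun t => E_even t

lemma tendsto_phi_atTop : Tendsto phi atTop (nhds 0) := by
  have h := tendsto_E_atTop.div_const (Real.sqrt (2 * Real.pi))
  rw [zero_div] at h
  exact h.congr fun z => (phi_eq z).symm

lemma tendsto_phi_atBot : Tendsto phi atBot (nhds 0) := by
  have h := tendsto_E_atBot.div_const (Real.sqrt (2 * Real.pi))
  rw [zero_div] at h
  exact h.congr fun z => (phi_eq z).symm

lemma tendsto_cdf_atTop : Tendsto stdNormalCDF atTop (nhds 1) := by
  have htail : Tendsto (fun z => ∫ t in Set.Ioi z, phi t) atTop (nhds 0) := by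
    refine tendsto_of_tendsto_of_tendsto_of_le_of_le'
      (g := fun _ => (0:ℝ)) (h := fun z => phi z * z⁻¹) tendsto_const_nhds ?_ ?_ ?_
    · have : Tendsto (fun z : ℝ => phi z * z⁻¹) atTop (nhds (0 * 0)) :=
        tendsto_phi_atTop.mul tendsto_inv_atTop_zero
      simpa using this
    · exact Eventually.of_forall fun z => (tail_pos z).le
    · filter_upwards [eventually_gt_atTop 0] with z hz
      have := tailphi_le hz
      rwa [div_eq_mul_inv] at this
  have : Tendsto (fun z => 1 - ∫ t in Set.Ioi z, phi t) atTop (nhds (1 - 0)) :=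
    tendsto_const_nhds.sub htail
  rw [sub_zero] at this
  exact this.congr fun z => by have := cdf_add_tail z; linarith

lemma tendsto_cdf_atBot : Tendsto stdNormalCDF atBot (nhds 0) := by
  refine tendsto_of_tendsto_of_tendsto_of_le_of_le'
    (g := fun _ => (0:ℝ)) (h := fun z => phi z * (-z)⁻¹) tendsto_const_nhds ?_ ?_ ?_
  · have : Tendsto (fun z : ℝ => phi z * (-z)⁻¹) atBot (nhds (0 * 0)) := by
      apply tendsto_phi_atBot.mul
      exact tendsto_inv_atTop_zero.comp tendsto_neg_atBot_atTop
    simpa using this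
  · exact Eventually.of_forall fun z => (cdf_pos z).le
  · filter_upwards [eventually_lt_atBot 0] with z hz
    rw [cdf_eq_tail_neg]
    have h := tailphi_le (show 0 < -z by linarith)
    rw [phi_even] at h
    rwa [div_eq_mul_inv] at h

lemma lim_c {a b : ℝ} (ha : 0 < a) :
    Tendsto (fun n : ℝ => 2 * Real.sqrt n / (a * Real.sqrt n + b)) atTop (nhds (2 / a)) := by
  have hden : Tendsto (fun n : ℝ => a + b * (Real.sqrt n)⁻¹) atTop (nhds (a + b * 0)) :=
    tendsto_const_nhds.add (tendsto_const_nhds.mul (tendsto_inv_atTop_zero.comp tendsto_sqrt_top))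
  rw [mul_zero, add_zero] at hden
  have hlim : Tendsto (fun n : ℝ => 2 / (a + b * (Real.sqrt n)⁻¹)) atTop (nhds (2 / a)) :=
    tendsto_const_nhds.div hden ha.ne'
  apply hlim.congr'
  have hu : Tendsto (fun n : ℝ => a * Real.sqrt n + b) atTop atTop :=
    tendsto_atTop_add_const_right _ b (tendsto_sqrt_top.const_mul_atTop ha)
  filter_upwards [eventually_gt_atTop 0, hu.eventually_gt_atTop 0] with n hn hun
  have hs : (0:ℝ) < Real.sqrt n := Real.sqrt_pos.2 hn
  set s := Real.sqrt n
  field_simp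

lemma lim_d {a b : ℝ} (ha : 0 < a) :
    Tendsto (fun n : ℝ => 2 * Real.sqrt n * (a * Real.sqrt n + b) / ((a * Real.sqrt n + b) ^ 2 + 1))
      atTop (nhds (2 / a)) := by
  have h1 : Tendsto (fun n : ℝ => a + b * (Real.sqrt n)⁻¹) atTop (nhds (a + b * 0)) :=
    tendsto_const_nhds.add (tendsto_const_nhds.mul (tendsto_inv_atTop_zero.comp tendsto_sqrt_top))
  rw [mul_zero, add_zero] at h1
  have h2 : Tendsto (fun n : ℝ => ((Real.sqrt n)⁻¹) ^ 2) atTop (nhds 0) := by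
    have := (tendsto_inv_atTop_zero.comp tendsto_sqrt_top).pow 2
    simpa using this
  have hden : Tendsto (fun n : ℝ => (a + b * (Real.sqrt n)⁻¹) ^ 2 + ((Real.sqrt n)⁻¹) ^ 2)
      atTop (nhds (a ^ 2 + 0)) := (h1.pow 2).add h2
  rw [add_zero] at hden
  have hlim : Tendsto (fun n : ℝ => 2 * (a + b * (Real.sqrt n)⁻¹) /
      ((a + b * (Real.sqrt n)⁻¹) ^ 2 + ((Real.sqrt n)⁻¹) ^ 2)) atTop (nhds (2 * a / a ^ 2)) :=
    (tendsto_const_nhds.mul h1).div hden (by positivity)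
  have : 2 * a / a ^ 2 = 2 / a := by field_simp
  rw [this] at hlim
  apply hlim.congr'
  filter_upwards [eventually_gt_atTop 0] with n hn
  have hs : (0:ℝ) < Real.sqrt n := Real.sqrt_pos.2 hn
  set s := Real.sqrt n
  field_simp

lemma lim_quad {c d e : ℝ} (hc : c < 0) :
    Tendsto (fun n : ℝ => c * n + d * Real.sqrt n + e) atTop atBot := by
  have hfac : Tendsto (fun n : ℝ => c + d * (Real.sqrt n)⁻¹ + e * n⁻¹) atTop
      (nhds (c + d * 0 + e * 0)) :=
    (tendsto_const_nhds.add (tendsto_const_nhds.mul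
      (tendsto_inv_atTop_zero.comp tendsto_sqrt_top))).add
      (tendsto_const_nhds.mul tendsto_inv_atTop_zero)
  rw [mul_zero, mul_zero, add_zero, add_zero] at hfac
  have := Filter.Tendsto.neg_mul_atTop hc hfac tendsto_id
  apply this.congr'
  filter_upwards [eventually_gt_atTop 0] with n hn
  have hs : (0:ℝ) < Real.sqrt n := Real.sqrt_pos.2 hn
  have hsq : n = Real.sqrt n * Real.sqrt n := (Real.mul_self_sqrt hn.le).symm
  simp only [id]
  set s := Real.sqrt n with hsdef
  rw [hsq]
  have hs' : s ≠ 0 := ne_of_gt hs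
  field_simp

lemma phi_ratio_lim {a b a' b' : ℝ} (h : a' ^ 2 < a ^ 2) :
    Tendsto (fun n : ℝ => phi (a * Real.sqrt n + b) / phi (a' * Real.sqrt n + b'))
      atTop (nhds 0) := by
  have key : ∀ n : ℝ, 0 ≤ n → phi (a * Real.sqrt n + b) / phi (a' * Real.sqrt n + b') =
      Real.exp ((a' ^ 2 - a ^ 2) / 2 * n + (a' * b' - a * b) * Real.sqrt n
        + (b' ^ 2 - b ^ 2) / 2) := by
    intro n hn
    have hsq : Real.sqrt n ^ 2 = n := Real.sq_sqrt hn
    unfold phi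
    rw [div_div_div_cancel_right₀ (by positivity : Real.sqrt (2 * Real.pi) ≠ 0)]
    rw [← Real.exp_sub]
    congr 1
    nlinarith [hsq]
  have hq := lim_quad (c := (a' ^ 2 - a ^ 2) / 2) (d := a' * b' - a * b)
    (e := (b' ^ 2 - b ^ 2) / 2) (by linarith)
  have := Real.tendsto_exp_atBot.comp hq
  apply this.congr'
  filter_upwards [eventually_ge_atTop 0] with n hn
  exact (key n hn).symm

/-! Key weighted-average limit lemma -/

lemma domLim {α β γ δ : ℝ} (hγ : γ ≠ 0) {A B c1 c2 : ℝ → ℝ}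
    (hA : ∀ᶠ n in atTop, 0 < A n)
    (hc1 : Tendsto c1 atTop (nhds γ)) (hc2 : Tendsto c2 atTop (nhds δ))
    (hr : Tendsto (fun n => B n / A n) atTop (nhds 0)) :
    Tendsto (fun n => (A n * α + B n * β) / (A n * c1 n + B n * c2 n)) atTop (nhds (α / γ)) := by
  have hnum : Tendsto (fun n => α + (B n / A n) * β) atTop (nhds (α + 0 * β)) :=
    tendsto_const_nhds.add (hr.mul tendsto_const_nhds)
  have hden : Tendsto (fun n => c1 n + (B n / A n) * c2 n) atTop (nhds (γ + 0 * δ)) :=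
    hc1.add (hr.mul hc2)
  rw [zero_mul, add_zero] at hnum hden
  have hlim := hnum.div hden hγ
  apply hlim.congr'
  filter_upwards [hA] with n hAn
  have hA0 : A n ≠ 0 := ne_of_gt hAn
  simp only [Pi.div_apply]
  rw [← mul_div_mul_left (α + B n / A n * β) (c1 n + B n / A n * c2 n) hA0]
  congr 1 <;> field_simp <;> ring

lemma keyLim {α β : ℝ} (hα : 0 < α) (hβ : 0 < β) {A B c1 c2 : ℝ → ℝ}
    (hA : ∀ᶠ n in atTop, 0 < A n) (hB : ∀ᶠ n in atTop, 0 < B n)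
    (hc1 : Tendsto c1 atTop (nhds (2 / α))) (hc2 : Tendsto c2 atTop (nhds (2 / β)))
    (hcase : α = β ∨ (α < β ∧ Tendsto (fun n => B n / A n) atTop (nhds 0)) ∨
      (β < α ∧ Tendsto (fun n => A n / B n) atTop (nhds 0))) :
    Tendsto (fun n => (A n * α + B n * β) / (A n * c1 n + B n * c2 n)) atTop
      (nhds (min (α ^ 2) (β ^ 2) / 2)) := by
  have hdiv : ∀ x : ℝ, 0 < x → x / (2 / x) = x ^ 2 / 2 := by
    intro x hx; field_simp
  rcases hcase with rfl | ⟨hlt, hr⟩ | ⟨hlt, hr⟩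
  · -- equal case
    rw [min_self]
    have hmax : Tendsto (fun n => α / max (c1 n) (c2 n)) atTop (nhds (α ^ 2 / 2)) := by
      have h1 : Tendsto (fun n => max (c1 n) (c2 n)) atTop (nhds (2 / α)) := by
        have := hc1.max hc2
        rwa [max_self] at this
      have := (tendsto_const_nhds : Tendsto (fun _ : ℝ => α) atTop (nhds α)).div h1
        (by positivity : (2:ℝ)/α ≠ 0)
      rwa [hdiv α hα] at this
    have hmin : Tendsto (fun n => α / min (c1 n) (c2 n)) atTop (nhds (α ^ 2 / 2)) := by
      have h1 : Tendsto (fun n => min (c1 n) (c2 n)) atTop (nhds (2 / α)) := by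
        have := hc1.min hc2
        rwa [min_self] at this
      have := (tendsto_const_nhds : Tendsto (fun _ : ℝ => α) atTop (nhds α)).div h1
        (by positivity : (2:ℝ)/α ≠ 0)
      rwa [hdiv α hα] at this
    refine tendsto_of_tendsto_of_tendsto_of_le_of_le' hmax hmin ?_ ?_
    · filter_upwards [hA, hB, hc1.eventually (eventually_gt_nhds (by positivity)),
        hc2.eventually (eventually_gt_nhds (by positivity))] with n hAn hBn hc1n hc2n
      have hABpos : 0 < A n + B n := by linarith
      have hmaxpos : 0 < max (c1 n) (c2 n) := lt_of_lt_of_le hc1n (le_max_left _ _)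
      have hdenpos : 0 < A n * c1 n + B n * c2 n := by positivity
      have hkey : A n * c1 n + B n * c2 n ≤ (A n + B n) * max (c1 n) (c2 n) := by
        have h1 : c1 n ≤ max (c1 n) (c2 n) := le_max_left _ _
        have h2 : c2 n ≤ max (c1 n) (c2 n) := le_max_right _ _
        nlinarith
      calc α / max (c1 n) (c2 n) = α * (A n + B n) / ((A n + B n) * max (c1 n) (c2 n)) := by
            rw [mul_comm α (A n + B n), mul_div_mul_left _ _ (ne_of_gt hABpos)]
        _ ≤ α * (A n + B n) / (A n * c1 n + B n * c2 n) := by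
            apply div_le_div_of_nonneg_left (by positivity) hdenpos hkey
        _ = (A n * α + B n * α) / (A n * c1 n + B n * c2 n) := by ring_nf
    · filter_upwards [hA, hB, hc1.eventually (eventually_gt_nhds (by positivity)),
        hc2.eventually (eventually_gt_nhds (by positivity))] with n hAn hBn hc1n hc2n
      have hABpos : 0 < A n + B n := by linarith
      have hminpos : 0 < min (c1 n) (c2 n) := lt_min hc1n hc2n
      have hdenpos : 0 < (A n + B n) * min (c1 n) (c2 n) := by positivity
      have hkey : (A n + B n) * min (c1 n) (c2 n) ≤ A n * c1 n + B n * c2 n := by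
        have h1 : min (c1 n) (c2 n) ≤ c1 n := min_le_left _ _
        have h2 : min (c1 n) (c2 n) ≤ c2 n := min_le_right _ _
        nlinarith
      calc (A n * α + B n * α) / (A n * c1 n + B n * c2 n)
          = α * (A n + B n) / (A n * c1 n + B n * c2 n) := by ring_nf
        _ ≤ α * (A n + B n) / ((A n + B n) * min (c1 n) (c2 n)) := by
            apply div_le_div_of_nonneg_left (by positivity) hdenpos hkey
        _ = α / min (c1 n) (c2 n) := by
            rw [mul_comm α (A n + B n), mul_div_mul_left _ _ (ne_of_gt hABpos)]
  · -- α < β : A dominates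
    have hmin : min (α ^ 2) (β ^ 2) = α ^ 2 :=
      min_eq_left (le_of_lt (by nlinarith))
    rw [hmin]
    have := domLim (α := α) (β := β) (by positivity : (2:ℝ)/α ≠ 0) hA hc1 hc2 hr
    rwa [hdiv α hα] at this
  · -- β < α : B dominates
    have hmin : min (α ^ 2) (β ^ 2) = β ^ 2 :=
      min_eq_right (le_of_lt (by nlinarith))
    rw [hmin]
    have := domLim (α := β) (β := α) (by positivity : (2:ℝ)/β ≠ 0) hB hc2 hc1 hr
    rw [hdiv β hβ] at this
    apply this.congr
    intro n
    rw [add_comm (B n * β) (A n * α), add_comm (B n * c2 n) (A n * c1 n)]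

theorem stmt_3 (aU aL bU bL : ℝ) (haU : 0 < aU) (haL : aL < 0) :
    Tendsto (fun n : ℝ => deriv (fun n : ℝ =>
        logit (stdNormalCDF (aU * Real.sqrt n + bU) - stdNormalCDF (aL * Real.sqrt n + bL))) n)
      atTop (nhds (min (aU ^ 2) (aL ^ 2) / 2)) := by
  set β : ℝ := -aL with hβdef
  have hβ : 0 < β := by rw [hβdef]; linarith
  set U : ℝ → ℝ := fun n => aU * Real.sqrt n + bU with hU
  set L : ℝ → ℝ := fun n => aL * Real.sqrt n + bL with hL
  set A : ℝ → ℝ := fun n => phi (U n) with hA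
  set B : ℝ → ℝ := fun n => phi (L n) with hB
  set p : ℝ → ℝ := fun n => stdNormalCDF (U n) - stdNormalCDF (L n) with hp
  set P : ℝ → ℝ := fun n => phi (U n) * (aU * (1 / (2 * Real.sqrt n)))
    - phi (L n) * (aL * (1 / (2 * Real.sqrt n))) with hP
  -- basic tendsto facts
  have hU_top : Tendsto U atTop atTop :=
    tendsto_atTop_add_const_right _ bU (tendsto_sqrt_top.const_mul_atTop haU)
  have hL_bot : Tendsto L atTop atBot :=
    tendsto_atBot_add_const_right _ bL
      (Filter.Tendsto.neg_mul_atTop haL tendsto_const_nhds tendsto_sqrt_top)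
  have hUpos : ∀ᶠ n in atTop, 0 < U n := hU_top.eventually_gt_atTop 0
  have hLneg : ∀ᶠ n in atTop, L n < 0 := hL_bot.eventually_lt_atBot 0
  -- p ∈ (0,1) eventually and p → 1
  have hp_lim : Tendsto p atTop (nhds 1) := by
    have := (tendsto_cdf_atTop.comp hU_top).sub (tendsto_cdf_atBot.comp hL_bot)
    rw [sub_zero] at this
    exact this
  -- derivative identity
  have hderiv_eq : ∀ᶠ n in atTop,
      P n / p n + P n / (1 - p n) = deriv (fun n : ℝ =>
        logit (stdNormalCDF (aU * Real.sqrt n + bU) - stdNormalCDF (aL * Real.sqrt n + bL))) n := by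
    filter_upwards [eventually_gt_atTop 0, hUpos, hLneg] with n hn hun hln
    have hp0 : 0 < p n := sub_pos.2 (cdf_strictMono (lt_trans hln hun))
    have hp1 : p n < 1 := by
      have h1 := cdf_lt_one (U n)
      have h2 := cdf_pos (L n)
      rw [hp]; simp only []
      linarith
    have hsq : HasDerivAt Real.sqrt (1 / (2 * Real.sqrt n)) n := Real.hasDerivAt_sqrt hn.ne'
    have hu' : HasDerivAt U (aU * (1 / (2 * Real.sqrt n))) n := (hsq.const_mul aU).add_const bU
    have hl' : HasDerivAt L (aL * (1 / (2 * Real.sqrt n))) n := (hsq.const_mul aL).add_const bL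
    have hcdfu : HasDerivAt (fun m => stdNormalCDF (U m))
        (phi (U n) * (aU * (1 / (2 * Real.sqrt n)))) n := (hasDerivAt_cdf (U n)).comp n hu'
    have hcdfl : HasDerivAt (fun m => stdNormalCDF (L m))
        (phi (L n) * (aL * (1 / (2 * Real.sqrt n)))) n := (hasDerivAt_cdf (L n)).comp n hl'
    have hpd : HasDerivAt p (P n) n := hcdfu.sub hcdfl
    have hlog1 : HasDerivAt (fun m => Real.log (p m)) ((p n)⁻¹ * P n) n :=
      (Real.hasDerivAt_log hp0.ne').comp n hpd
    have hlog2 : HasDerivAt (fun m => Real.log (1 - p m)) ((1 - p n)⁻¹ * (0 - P n)) n :=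
      (Real.hasDerivAt_log (by linarith : (1:ℝ) - p n ≠ 0)).comp (h := fun m => 1 - p m) n
        ((hasDerivAt_const n 1).sub hpd : HasDerivAt (fun m => 1 - p m) (0 - P n) n)
    have hh : HasDerivAt (fun m => Real.log (p m) - Real.log (1 - p m))
        ((p n)⁻¹ * P n - (1 - p n)⁻¹ * (0 - P n)) n := hlog1.sub hlog2
    have hfeq : (fun n : ℝ => logit (stdNormalCDF (aU * Real.sqrt n + bU)
        - stdNormalCDF (aL * Real.sqrt n + bL)))
        = fun m => Real.log (p m) - Real.log (1 - p m) := rfl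
    rw [hfeq, hh.deriv]
    field_simp
    ring
  -- P → 0
  have hhalf : Tendsto (fun n : ℝ => 1 / (2 * Real.sqrt n)) atTop (nhds 0) := by
    have h2 : Tendsto (fun n : ℝ => 2 * Real.sqrt n) atTop atTop :=
      tendsto_sqrt_top.const_mul_atTop (by norm_num)
    have := tendsto_inv_atTop_zero.comp h2
    exact this.congr fun n => (one_div _).symm
  have hP_lim : Tendsto P atTop (nhds 0) := by
    have h1 : Tendsto (fun n => phi (U n) * (aU * (1 / (2 * Real.sqrt n)))) atTop
        (nhds (0 * (aU * 0))) :=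
      (tendsto_phi_atTop.comp hU_top).mul (tendsto_const_nhds.mul hhalf)
    have h2 : Tendsto (fun n => phi (L n) * (aL * (1 / (2 * Real.sqrt n)))) atTop
        (nhds (0 * (aL * 0))) :=
      (tendsto_phi_atBot.comp hL_bot).mul (tendsto_const_nhds.mul hhalf)
    have h3 := h1.sub h2
    simp only [mul_zero, zero_mul, sub_zero] at h3
    rw [hP]
    exact h3
  have hterm1 : Tendsto (fun n => P n / p n) atTop (nhds 0) := by
    have := hP_lim.div hp_lim one_ne_zero
    rw [zero_div] at this; exact this
  -- term 2 via squeeze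
  set c1 : ℝ → ℝ := fun n => 2 * Real.sqrt n / (aU * Real.sqrt n + bU) with hc1def
  set c2 : ℝ → ℝ := fun n => 2 * Real.sqrt n / (β * Real.sqrt n + -bL) with hc2def
  set d1 : ℝ → ℝ := fun n => 2 * Real.sqrt n * (aU * Real.sqrt n + bU)
    / ((aU * Real.sqrt n + bU) ^ 2 + 1) with hd1def
  set d2 : ℝ → ℝ := fun n => 2 * Real.sqrt n * (β * Real.sqrt n + -bL)
    / ((β * Real.sqrt n + -bL) ^ 2 + 1) with hd2def
  have hc1 : Tendsto c1 atTop (nhds (2 / aU)) := lim_c haU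
  have hc2 : Tendsto c2 atTop (nhds (2 / β)) := lim_c hβ
  have hd1 : Tendsto d1 atTop (nhds (2 / aU)) := lim_d haU
  have hd2 : Tendsto d2 atTop (nhds (2 / β)) := lim_d hβ
  have hApos : ∀ᶠ n in atTop, 0 < A n := Eventually.of_forall fun n => phi_pos _
  have hBpos : ∀ᶠ n in atTop, 0 < B n := Eventually.of_forall fun n => phi_pos _
  have hcase : aU = β ∨ (aU < β ∧ Tendsto (fun n => B n / A n) atTop (nhds 0)) ∨
      (β < aU ∧ Tendsto (fun n => A n / B n) atTop (nhds 0)) := by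
    rcases lt_trichotomy aU β with h | h | h
    · refine Or.inr (Or.inl ⟨h, ?_⟩)
      have hsq : aU ^ 2 < aL ^ 2 := by nlinarith
      exact phi_ratio_lim (a := aL) (b := bL) (a' := aU) (b' := bU) hsq
    · exact Or.inl h
    · refine Or.inr (Or.inr ⟨h, ?_⟩)
      have hsq : aL ^ 2 < aU ^ 2 := by nlinarith
      exact phi_ratio_lim (a := aU) (b := bU) (a' := aL) (b' := bL) hsq
  have hmin_eq : min (aU ^ 2) (β ^ 2) = min (aU ^ 2) (aL ^ 2) := by
    rw [hβdef]; ring_nf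
  have hKc : Tendsto (fun n => (A n * aU + B n * β) / (A n * c1 n + B n * c2 n)) atTop
      (nhds (min (aU ^ 2) (aL ^ 2) / 2)) := by
    rw [← hmin_eq]; exact keyLim haU hβ hApos hBpos hc1 hc2 hcase
  have hKd : Tendsto (fun n => (A n * aU + B n * β) / (A n * d1 n + B n * d2 n)) atTop
      (nhds (min (aU ^ 2) (aL ^ 2) / 2)) := by
    rw [← hmin_eq]; exact keyLim haU hβ hApos hBpos hd1 hd2 hcase
  have hterm2 : Tendsto (fun n => P n / (1 - p n)) atTop
      (nhds (min (aU ^ 2) (aL ^ 2) / 2)) := by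
    refine tendsto_of_tendsto_of_tendsto_of_le_of_le' hKc hKd ?_ ?_
    · -- lower bound: (A aU + B β)/(A c1 + B c2) ≤ P/(1-p)
      filter_upwards [eventually_gt_atTop 0, hUpos, hLneg] with n hn hun hln
      have hs : (0:ℝ) < Real.sqrt n := Real.sqrt_pos.2 hn
      have hnl : (0:ℝ) < -L n := by linarith
      -- 1 - p n = tail(U n) + cdf(L n)
      have hT : 1 - p n = (∫ t in Set.Ioi (U n), phi t) + stdNormalCDF (L n) := by
        have := cdf_add_tail (U n)
        rw [hp]; simp only []; linarith
      have hTpos : 0 < 1 - p n := by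
        rw [hT]
        have := tail_pos (U n)
        have := cdf_pos (L n)
        linarith
      have hPval : P n = (A n * aU + B n * β) / (2 * Real.sqrt n) := by
        rw [hP, hA, hB, hβdef]; simp only []; ring
      have hPpos : 0 < P n := by
        rw [hPval]
        have := phi_pos (U n); have := phi_pos (L n)
        apply div_pos _ (by positivity)
        have : 0 < A n := phi_pos _
        have : 0 < B n := phi_pos _
        nlinarith
      -- upper bound for 1 - p
      have hTup : 1 - p n ≤ A n / U n + B n / (-L n) := by
        rw [hT]
        have h1 : (∫ t in Set.Ioi (U n), phi t) ≤ phi (U n) / U n := tailphi_le hun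
        have h2 : stdNormalCDF (L n) ≤ phi (L n) / (-L n) := by
          rw [cdf_eq_tail_neg]
          have := tailphi_le hnl
          rwa [phi_even] at this
        rw [hA, hB]; simp only []
        exact add_le_add h1 h2
      have hTup_pos : 0 < A n / U n + B n / (-L n) := by
        have := phi_pos (U n); have := phi_pos (L n)
        positivity
      -- (A aU + B β)/(A c1 + B c2) = P n / (A/U + B/(-L))
      have heq1 : (A n * aU + B n * β) / (A n * c1 n + B n * c2 n)
          = P n / (A n / U n + B n / (-L n)) := by
        rw [hPval, div_div]
        congr 1
        rw [hc1def, hc2def, hU, hL, hβdef]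
        simp only []
        ring
      rw [heq1]
      exact div_le_div_of_nonneg_left hPpos.le hTpos hTup
    · -- upper bound: P/(1-p) ≤ (A aU + B β)/(A d1 + B d2)
      filter_upwards [eventually_gt_atTop 0, hUpos, hLneg] with n hn hun hln
      have hs : (0:ℝ) < Real.sqrt n := Real.sqrt_pos.2 hn
      have hnl : (0:ℝ) < -L n := by linarith
      have hT : 1 - p n = (∫ t in Set.Ioi (U n), phi t) + stdNormalCDF (L n) := by
        have := cdf_add_tail (U n)
        rw [hp]; simp only []; linarith
      have hPval : P n = (A n * aU + B n * β) / (2 * Real.sqrt n) := by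
        rw [hP, hA, hB, hβdef]; simp only []; ring
      have hPpos : 0 < P n := by
        rw [hPval]
        apply div_pos _ (by positivity)
        have h1 : 0 < A n := phi_pos _
        have h2 : 0 < B n := phi_pos _
        nlinarith
      -- lower bound for 1 - p
      have hTlow_pos : 0 < U n / (U n ^ 2 + 1) * A n + (-L n) / (L n ^ 2 + 1) * B n := by
        have h1 : 0 < A n := phi_pos _
        have h2 : 0 < B n := phi_pos _
        have h3 : (0:ℝ) < U n ^ 2 + 1 := by positivity
        have h4 : (0:ℝ) < L n ^ 2 + 1 := by positivity
        positivity
      have hTlow : U n / (U n ^ 2 + 1) * A n + (-L n) / (L n ^ 2 + 1) * B n ≤ 1 - p n := by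
        rw [hT]
        have h1 : U n / (U n ^ 2 + 1) * phi (U n) ≤ ∫ t in Set.Ioi (U n), phi t :=
          le_tailphi hun
        have h2 : (-L n) / (L n ^ 2 + 1) * phi (L n) ≤ stdNormalCDF (L n) := by
          rw [cdf_eq_tail_neg]
          have := le_tailphi hnl
          rw [phi_even] at this
          have hexp : (-L n) ^ 2 = L n ^ 2 := by ring
          rwa [hexp] at this
        rw [hA, hB]; simp only []
        exact add_le_add h1 h2
      have heq2 : (A n * aU + B n * β) / (A n * d1 n + B n * d2 n)
          = P n / (U n / (U n ^ 2 + 1) * A n + (-L n) / (L n ^ 2 + 1) * B n) := by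
        rw [hPval, div_div]
        congr 1
        rw [hd1def, hd2def, hU, hL, hβdef]
        simp only []
        ring
      rw [heq2]
      exact div_le_div_of_nonneg_left hPpos.le hTlow_pos hTlow
  -- combine
  have hsum : Tendsto (fun n => P n / p n + P n / (1 - p n)) atTop
      (nhds (0 + min (aU ^ 2) (aL ^ 2) / 2)) := hterm1.add hterm2
  rw [zero_add] at hsum
  exact hsum.congr' hderiv_eq
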